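/- If k is even and k + 1 ≤ i ≤ n, then the shortest odd cycle in Q_{n,k} containing a given i-dimensional hypercube edge has length exactly k + 3. -/

import Mathlib

open SimpleGraph

/-- The `n`-dimensional hypercube: vertices are binary strings of length `n`
(indexed so that bit `i+1` of the paper is index `i`), adjacent iff they
differ in exactly one bit. -/
def hypercube (n : ℕ) : SimpleGraph (Fin n → Bool) where
  Adj u v := ∃! i, u i ≠ v i
  symm := ⟨by
    rintro u v ⟨i, hi, hu⟩
    exact ⟨i, hi.symm, fun j hj => hu j hj.symm⟩⟩
  loopless := ⟨by
    rintro u ⟨i, hi, -⟩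
    exact hi rfl⟩

/-- Skip relation: `u` and `v` differ exactly in the last `k` bits
(indices `0, …, k-1`). -/
def skipRel (n k : ℕ) (u v : Fin n → Bool) : Prop :=
  u ≠ v ∧ ∀ i : Fin n, (i.val < k → u i ≠ v i) ∧ (k ≤ i.val → u i = v i)

/-- The enhanced hypercube `Q_{n,k}`: hypercube edges together with skip edges. -/
def enhanced (n k : ℕ) : SimpleGraph (Fin n → Bool) where
  Adj u v := (hypercube n).Adj u v ∨ skipRel n k u v
  symm := ⟨by
    rintro u v (h | ⟨hne, h⟩)
    · exact Or.inl (SimpleGraph.Adj.symm h)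
    · exact Or.inr ⟨hne.symm, fun i =>
        ⟨fun hi => ((h i).1 hi).symm, fun hi => ((h i).2 hi).symm⟩⟩⟩
  loopless := ⟨by
    rintro u (h | ⟨hne, -⟩)
    · exact (hypercube n).irrefl h
    · exact hne rfl⟩

/-- The folded hypercube `FQ_n`: hypercube edges together with complementary edges. -/
def folded (n : ℕ) : SimpleGraph (Fin n → Bool) where
  Adj u v := (hypercube n).Adj u v ∨ (u ≠ v ∧ ∀ i, u i ≠ v i)
  symm := ⟨by
    rintro u v (h | ⟨hne, h⟩)
    · exact Or.inl (SimpleGraph.Adj.symm h)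
    · exact Or.inr ⟨hne.symm, fun i => (h i).symm⟩⟩
  loopless := ⟨by
    rintro u (h | ⟨hne, -⟩)
    · exact (hypercube n).irrefl h
    · exact hne rfl⟩

/-- The Cartesian product `K₂ × G`: two copies of `G` joined by crossing edges. -/
def K2Prod {V : Type*} (G : SimpleGraph V) : SimpleGraph (Bool × V) :=
  (completeGraph Bool) □ G

/-- The edge `e` lies on a cycle of length `l` in `G`. -/
def EdgeOnCycle {V : Type*} (G : SimpleGraph V) (e : Sym2 V) (l : ℕ) : Prop :=
  ∃ (v : V) (c : G.Walk v v), c.IsCycle ∧ c.length = l ∧ e ∈ c.edges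


namespace Stmt17Aux

def flipB {n : ℕ} (j : Fin n) : Sym2 (Fin n → Bool) → Bool :=
  Sym2.lift ⟨fun a b => xor (a j) (b j), fun a b => Bool.xor_comm _ _⟩

@[simp] lemma flipB_mk {n : ℕ} (j : Fin n) (a b : Fin n → Bool) :
    flipB j s(a, b) = xor (a j) (b j) := rfl

lemma walk_parity {n k : ℕ} {x y : Fin n → Bool} (p : (enhanced n k).Walk x y) (j : Fin n) :
    (p.edges.countP (fun e => flipB j e)) % 2 = if x j = y j then 0 else 1 := by
  induction p with
  | nil => simp
  | @cons x b y h p ih =>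
    rw [Walk.edges_cons, List.countP_cons]
    cases hx : x j <;> cases hb : b j <;> cases hy : y j <;>
      simp_all <;> omega

lemma countP_split {α : Type*} (l : List α) (p q : α → Bool) :
    l.countP p = l.countP (fun a => p a && q a) + l.countP (fun a => p a && !q a) := by
  induction l with
  | nil => simp
  | cons a l ih =>
    simp only [List.countP_cons, ih]
    cases hp : p a <;> cases hq : q a <;> simp <;> omega

lemma sum_countP {α β : Type*} [Fintype β] [DecidableEq β] (l : List α) (f : β → α → Bool) (g : α → Bool)
    (H : ∀ a ∈ l, (Finset.univ.filter (fun j => f j a)).card = if g a then 1 else 0) :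
    ∑ j, l.countP (f j) = l.countP g := by
  induction l with
  | nil => simp
  | cons a l ih =>
    simp only [List.countP_cons, Finset.sum_add_distrib]
    rw [ih (fun a ha => H a (List.mem_cons_of_mem _ ha))]
    congr 1
    rw [← H a List.mem_cons_self, Finset.card_filter]

lemma card_filter_lt {n k : ℕ} (hkn : k ≤ n) :
    (Finset.univ.filter (fun j : Fin n => j.val < k)).card = k := by
  have : Finset.univ.filter (fun j : Fin n => j.val < k)
      = (Finset.univ : Finset (Fin k)).image (Fin.castLE hkn) := by
    ext j
    simp only [Finset.mem_filter, Finset.mem_univ, true_and, Finset.mem_image]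
    constructor
    · intro hj
      exact ⟨⟨j.val, hj⟩, by ext; simp⟩
    · rintro ⟨t, rfl⟩; exact t.isLt
  rw [this, Finset.card_image_of_injective _ (Fin.castLE_injective hkn)]
  simp

def isSkipB {n : ℕ} (hn : 1 < n) (e : Sym2 (Fin n → Bool)) : Bool :=
  flipB ⟨0, by omega⟩ e && flipB ⟨1, hn⟩ e

lemma flipB_eq_true {n : ℕ} (j : Fin n) (a b : Fin n → Bool) :
    (flipB j s(a,b) = true) ↔ a j ≠ b j := by
  rw [flipB_mk]; cases a j <;> cases b j <;> simp

lemma classify {n k : ℕ} (hn : 1 < n) (hk2 : 2 ≤ k) (e : Sym2 (Fin n → Bool))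
    (he : e ∈ (enhanced n k).edgeSet) :
    (isSkipB hn e = true ∧ ∀ j : Fin n, (flipB j e = true ↔ j.val < k)) ∨
    (isSkipB hn e = false ∧ ∃ j₀ : Fin n, ∀ j, (flipB j e = true ↔ j = j₀)) := by
  induction e using Sym2.ind with
  | _ a b =>
    rw [SimpleGraph.mem_edgeSet] at he
    rcases he with ⟨j₀, hj₀, huniq⟩ | ⟨hne, hprop⟩
    · right
      have hflip : ∀ j : Fin n, (flipB j s(a,b) = true ↔ j = j₀) := by
        intro j
        rw [flipB_eq_true]
        exact ⟨fun h => huniq j h, fun h => h ▸ hj₀⟩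
      refine ⟨?_, j₀, hflip⟩
      by_contra hs
      rw [Bool.not_eq_false, isSkipB, Bool.and_eq_true] at hs
      have h0 := (hflip _).1 hs.1
      have h1 := (hflip _).1 hs.2
      have := h0.trans h1.symm
      simp [Fin.ext_iff] at this
    · left
      have hflip : ∀ j : Fin n, (flipB j s(a,b) = true ↔ j.val < k) := by
        intro j
        rw [flipB_eq_true]
        constructor
        · intro h
          by_contra hlt
          exact h ((hprop j).2 (le_of_not_gt hlt))
        · intro h; exact (hprop j).1 h
      refine ⟨?_, hflip⟩
      rw [isSkipB, Bool.and_eq_true]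
      exact ⟨(hflip _).2 (by simpa using by omega : (⟨0, by omega⟩ : Fin n).val < k),
             (hflip _).2 (by simpa using by omega : (⟨1, hn⟩ : Fin n).val < k)⟩

lemma lower {n k : ℕ} (hk : Even k) (h1 : 2 ≤ k) (i : Fin n) (hi : k ≤ i.val)
    (u v : Fin n → Bool) (huv : ∀ j, u j ≠ v j ↔ j = i)
    (x : Fin n → Bool) (c : (enhanced n k).Walk x x) (hc : c.IsCycle)
    (hodd : Odd c.length) (hmem : s(u,v) ∈ c.edges) : k + 3 ≤ c.length := by
  have hn : 1 < n := lt_of_le_of_lt (le_trans (by omega) hi) i.isLt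
  have hEsub : ∀ e ∈ c.edges, e ∈ (enhanced n k).edgeSet :=
    fun e he => c.edges_subset_edgeSet he
  have hlen : c.edges.length = c.length := c.length_edges
  set E := c.edges with hE
  set s := E.countP (fun e => isSkipB hn e) with hs_def
  set h := E.countP (fun e => !(isSkipB hn e)) with hh_def
  set cnt := fun j : Fin n => E.countP (fun e => flipB j e) with hcnt_def
  set hcnt := fun j : Fin n => E.countP (fun e => flipB j e && !(isSkipB hn e)) with hhcnt_def
  have cnt_even : ∀ j : Fin n, cnt j % 2 = 0 := by
    intro j
    rw [hcnt_def]
    simp only [hE]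
    rw [walk_parity c j, if_pos rfl]
  have split : ∀ j : Fin n,
      cnt j = (if j.val < k then s else 0) + hcnt j := by
    intro j
    show E.countP (fun e => flipB j e)
      = (if j.val < k then s else 0) + E.countP (fun e => flipB j e && !(isSkipB hn e))
    rw [countP_split E (fun e => flipB j e) (fun e => isSkipB hn e)]
    congr 1
    by_cases hj : j.val < k
    · rw [if_pos hj, hs_def]
      apply List.countP_congr
      intro e he
      rcases classify hn h1 e (hEsub e he) with ⟨h1', h2'⟩ | ⟨h1', h2'⟩
      · simp [h1', (h2' j).2 hj]
      · simp [h1']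
    · rw [if_neg hj]
      rw [List.countP_eq_zero]
      intro e he
      rcases classify hn h1 e (hEsub e he) with ⟨h1', h2'⟩ | ⟨h1', h2'⟩
      · simp only [Bool.and_eq_true]
        rintro ⟨hf, -⟩
        exact hj ((h2' j).1 hf)
      · simp [h1']
  have hsum : ∑ j : Fin n, hcnt j = h := by
    rw [hhcnt_def, hh_def]
    apply sum_countP
    intro e he
    rcases classify hn h1 e (hEsub e he) with ⟨h1', h2'⟩ | ⟨h1', h2'⟩
    · simp [h1']
    · rcases h2' with ⟨j₀, hj₀⟩
      have : (Finset.univ.filter (fun j : Fin n => flipB j e && !(isSkipB hn e))) = {j₀} := by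
        ext j
        simp [h1', hj₀ j]
      rw [this, h1']
      simp
  have hsplit_sum : ∑ j : Fin n, cnt j = k * s + h := by
    rw [Finset.sum_congr rfl (fun j _ => split j), Finset.sum_add_distrib, hsum]
    congr 1
    rw [Finset.sum_ite, Finset.sum_const, Finset.sum_const, smul_eq_mul, smul_eq_mul,
      card_filter_lt (le_trans hi (le_of_lt i.isLt)), mul_zero, add_zero]
  have hC : (∑ j : Fin n, cnt j) % 2 = 0 := by
    rw [Finset.sum_nat_mod]
    simp [cnt_even]
  have hks : (k * s) % 2 = 0 := Nat.even_iff.1 (hk.mul_right s)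
  have hLsh : s + h = c.length := by
    rw [hs_def, hh_def, ← hlen, List.length_eq_countP_add_countP (fun e => isSkipB hn e)]
    congr 1
    apply List.countP_congr
    intro e _
    simp
  have hLodd : c.length % 2 = 1 := Nat.odd_iff.1 hodd
  -- s is odd
  have hh_even : h % 2 = 0 := by omega
  have hs_odd : s % 2 = 1 := by omega
  -- hcnt i ≥ 2
  have hi_notlt : ¬ i.val < k := not_lt.2 hi
  have hcnt_i_even : hcnt i % 2 = 0 := by
    have := split i
    rw [if_neg hi_notlt] at this
    have := cnt_even i
    omega
  have hmem' : (fun e => flipB i e && !(isSkipB hn e)) s(u,v) = true := by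
    have hui : u i ≠ v i := (huv i).2 rfl
    have hu0 : u ⟨0, by omega⟩ = v ⟨0, by omega⟩ := by
      by_contra hne
      have := (huv _).1 hne
      rw [Fin.ext_iff] at this
      simp at this
      omega
    simp only [Bool.and_eq_true, Bool.not_eq_true']
    constructor
    · rw [flipB_eq_true]; exact hui
    · rw [isSkipB, Bool.and_eq_false_iff]
      left
      rw [flipB_mk, hu0]
      simp
  have hcnt_i_pos : 0 < hcnt i := by
    beta_reduce
    exact List.countP_pos_iff.2 ⟨s(u,v), hmem, hmem'⟩
  have hcnt_i_two : 2 ≤ hcnt i := by omega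
  -- hcnt j ≥ 1 for j < k
  have hcnt_lt : ∀ j : Fin n, j.val < k → 1 ≤ hcnt j := by
    intro j hj
    have hsp := split j
    rw [if_pos hj] at hsp
    have := cnt_even j
    omega
  -- sum bound
  have hKsub : insert i (Finset.univ.filter (fun j : Fin n => j.val < k)) ⊆ Finset.univ :=
    Finset.subset_univ _
  have hinotmem : i ∉ Finset.univ.filter (fun j : Fin n => j.val < k) := by
    simp [hi_notlt]
  have hsum_ge : k + 2 ≤ ∑ j : Fin n, hcnt j := by
    calc k + 2 = 2 + ∑ _j ∈ Finset.univ.filter (fun j : Fin n => j.val < k), 1 := by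
          rw [Finset.sum_const, card_filter_lt (le_trans hi (le_of_lt i.isLt)), smul_eq_mul, mul_one]; omega
    _ ≤ hcnt i + ∑ j ∈ Finset.univ.filter (fun j : Fin n => j.val < k), hcnt j := by
          gcongr with j hj
          exact hcnt_lt j (by simpa using hj)
    _ = ∑ j ∈ insert i (Finset.univ.filter (fun j : Fin n => j.val < k)), hcnt j := by
          rw [Finset.sum_insert hinotmem]
    _ ≤ ∑ j : Fin n, hcnt j := Finset.sum_le_sum_of_subset hKsub
  rw [hsum] at hsum_ge
  omega

def yv {n : ℕ} (u : Fin n → Bool) (m : ℕ) : Fin n → Bool :=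
  fun j => if j.val < m then !(u j) else u j

lemma yv_lt {n : ℕ} (u : Fin n → Bool) {m : ℕ} {j : Fin n} (h : j.val < m) :
    yv u m j = !(u j) := if_pos h

lemma yv_ge {n : ℕ} (u : Fin n → Bool) {m : ℕ} {j : Fin n} (h : ¬ j.val < m) :
    yv u m j = u j := if_neg h

lemma exists_cycle {n k : ℕ} (h1 : 2 ≤ k) (i : Fin n) (hi : k ≤ i.val)
    (u v : Fin n → Bool) (huv : ∀ j, u j ≠ v j ↔ j = i) :
    ∃ (x : Fin n → Bool) (c : (enhanced n k).Walk x x),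
      c.IsCycle ∧ c.length = k + 3 ∧ s(u, v) ∈ c.edges := by
  have hkn : k < n := lt_of_le_of_lt hi i.isLt
  have hvi : u i ≠ v i := (huv i).2 rfl
  have hne_of : ∀ j : Fin n, j ≠ i → u j = v j := by
    intro j hj
    by_contra hne
    exact hj ((huv j).1 hne)
  obtain ⟨w, hw⟩ : ∃ w : Fin n → Bool, w = fun j => if j.val < k then !(u j) else v j :=
    ⟨_, rfl⟩
  have hw_lt : ∀ {j : Fin n}, j.val < k → w j = !(u j) := by
    intro j h; simp only [hw]; rw [if_pos h]
  have hw_ge : ∀ {j : Fin n}, ¬ j.val < k → w j = v j := by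
    intro j h; simp only [hw]; rw [if_neg h]
  have hyi : ∀ t, t ≤ k → yv u t i = u i := fun t ht => yv_ge u (by omega)
  -- the path from yv u m back to u
  have key : ∀ m, m ≤ k → ∃ q : (enhanced n k).Walk (yv u m) u,
      q.length = m ∧ (∀ z ∈ q.support, ∃ t, t ≤ m ∧ z = yv u t) ∧ q.support.Nodup ∧
      (∀ e ∈ q.edges, ∃ t, t < m ∧ e = s(yv u (t+1), yv u t)) := by
    intro m
    induction m with
    | zero =>
      intro _
      have hy0 : u = yv u 0 := funext fun j => (yv_ge u (by omega)).symm
      refine ⟨Walk.nil.copy hy0 rfl, by simp, ?_, by simp, by simp⟩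
      intro z hz
      simp only [Walk.support_copy, Walk.support_nil, List.mem_singleton] at hz
      exact ⟨0, le_refl _, hz.trans hy0⟩
    | succ m ih =>
      intro hm
      obtain ⟨q, hqlen, hqsupp, hqnodup, hqedges⟩ := ih (by omega)
      have hmn : m < n := by omega
      have adj : (enhanced n k).Adj (yv u (m+1)) (yv u m) := by
        refine Or.inl ⟨⟨m, hmn⟩, ?_, ?_⟩
        · show yv u (m+1) ⟨m, hmn⟩ ≠ yv u m ⟨m, hmn⟩
          rw [yv_lt u (by simp), yv_ge u (by simp)]
          simp
        · intro j hj
          by_contra hne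
          rcases lt_trichotomy j.val m with hlt | heq | hgt
          · rw [yv_lt u (by omega), yv_lt u (by omega)] at hj
            exact hj rfl
          · exact hne (Fin.ext heq)
          · rw [yv_ge u (by omega), yv_ge u (by omega)] at hj
            exact hj rfl
      refine ⟨Walk.cons adj q, by simp [hqlen], ?_, ?_, ?_⟩
      · intro z hz
        rw [Walk.support_cons, List.mem_cons] at hz
        rcases hz with rfl | hz
        · exact ⟨m+1, le_refl _, rfl⟩
        · obtain ⟨t, ht, rfl⟩ := hqsupp z hz
          exact ⟨t, by omega, rfl⟩
      · rw [Walk.support_cons, List.nodup_cons]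
        refine ⟨?_, hqnodup⟩
        intro hmem
        obtain ⟨t, ht, heq⟩ := hqsupp _ hmem
        have := congrFun heq ⟨m, hmn⟩
        rw [yv_lt u (by simp), yv_ge u (by simp; omega)] at this
        simp at this
      · intro e he
        rw [Walk.edges_cons, List.mem_cons] at he
        rcases he with rfl | he
        · exact ⟨m, by omega, rfl⟩
        · obtain ⟨t, ht, rfl⟩ := hqedges e he
          exact ⟨t, by omega, rfl⟩
  obtain ⟨q, hqlen, hqsupp, hqnodup, hqedges⟩ := key k le_rfl
  -- adjacencies
  have adj_uv : (enhanced n k).Adj u v :=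
    Or.inl ⟨i, hvi, fun j hj => (huv j).1 hj⟩
  have hb0k : (⟨0, by omega⟩ : Fin n).val < k := by simpa using by omega
  have hb0i : (⟨0, by omega⟩ : Fin n) ≠ i := by
    intro hh
    rw [Fin.ext_iff] at hh
    simp at hh
    omega
  have hub0 : u ⟨0, by omega⟩ = v ⟨0, by omega⟩ := hne_of _ hb0i
  have adj_vw : (enhanced n k).Adj v w := by
    refine Or.inr ⟨?_, ?_⟩
    · intro hh
      have := congrFun hh ⟨0, by omega⟩
      rw [hw_lt hb0k, ← hub0] at this
      simp at this
    · intro j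
      refine ⟨?_, ?_⟩
      · intro hj
        show v j ≠ w j
        rw [hw_lt hj, ← hne_of j (by intro hh; subst hh; omega)]
        simp
      · intro hj
        show v j = w j
        rw [hw_ge (by omega)]
  have adj_wyk : (enhanced n k).Adj w (yv u k) := by
    refine Or.inl ⟨i, ?_, ?_⟩
    · show w i ≠ yv u k i
      rw [hw_ge (by omega), hyi k le_rfl]
      exact fun hh => hvi hh.symm
    · intro j hj
      by_contra hne
      by_cases hjk : j.val < k
      · rw [hw_lt hjk, yv_lt u hjk] at hj
        exact hj rfl
      · rw [hw_ge hjk, yv_ge u hjk, ← hne_of j hne] at hj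
        exact hj rfl
  -- the cycle
  obtain ⟨P, hP⟩ : ∃ P : (enhanced n k).Walk v u,
      P = Walk.cons adj_vw (Walk.cons adj_wyk q) := ⟨_, rfl⟩
  refine ⟨u, Walk.cons adj_uv P, ?_, ?_, ?_⟩
  · rw [Walk.cons_isCycle_iff]
    constructor
    · rw [Walk.isPath_def, hP, Walk.support_cons, Walk.support_cons, List.nodup_cons,
        List.nodup_cons]
      have hvq : v ∉ q.support := by
        intro hmem
        obtain ⟨t, ht, heq⟩ := hqsupp _ hmem
        have := congrFun heq i
        rw [hyi t ht] at this
        exact hvi this.symm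
      have hwq : w ∉ q.support := by
        intro hmem
        obtain ⟨t, ht, heq⟩ := hqsupp _ hmem
        have := congrFun heq i
        rw [hyi t ht, hw_ge (by omega)] at this
        exact hvi this.symm
      have hvw : v ≠ w := by
        intro hh
        have := congrFun hh ⟨0, by omega⟩
        rw [hw_lt hb0k, ← hub0] at this
        simp at this
      refine ⟨?_, ⟨hwq, hqnodup⟩⟩
      rw [List.mem_cons]
      rintro (rfl | hmem)
      · exact hvw rfl
      · exact hvq hmem
    · intro hmem
      have huw : u ≠ w := by
        intro hh
        have := congrFun hh ⟨0, by omega⟩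
        rw [hw_lt hb0k] at this
        simp at this
      have hvy : ∀ t, t ≤ k → v ≠ yv u t := by
        intro t ht hh
        have := congrFun hh i
        rw [hyi t ht] at this
        exact hvi this.symm
      rw [hP, Walk.edges_cons, Walk.edges_cons, List.mem_cons, List.mem_cons] at hmem
      rcases hmem with heq | heq | hmem
      · rw [Sym2.eq_iff] at heq
        rcases heq with ⟨rfl, -⟩ | ⟨huw', -⟩
        · exact hvi rfl
        · exact huw huw'
      · rw [Sym2.eq_iff] at heq
        rcases heq with ⟨huw', -⟩ | ⟨-, hvw'⟩
        · exact huw huw'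
        · -- v = w
          have := congrFun hvw' ⟨0, by omega⟩
          rw [hw_lt hb0k, ← hub0] at this
          simp at this
      · obtain ⟨t, ht, heq⟩ := hqedges _ hmem
        rw [Sym2.eq_iff] at heq
        rcases heq with ⟨-, hv'⟩ | ⟨-, hv'⟩
        · exact hvy t (by omega) hv'
        · exact hvy (t+1) (by omega) hv'
  · simp [hP, hqlen]
  · rw [Walk.edges_cons]
    exact List.mem_cons_self

end Stmt17Aux

/-- If `k` is even and `i` is a dimension with `k + 1 ≤ i ≤ n`, then the shortest
odd cycle in `Q_{n,k}` containing a given `i`-dimensional hypercube edge has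
length exactly `k + 3`. (Here the dimension `i` of the paper corresponds to the
index `i` with `k ≤ i.val`.) -/
theorem stmt17 (n k : ℕ) (hk : Even k) (h1 : 2 ≤ k) (i : Fin n) (hi : k ≤ i.val) :
    ∀ u v : Fin n → Bool, (∀ j, u j ≠ v j ↔ j = i) →
      (∃ (x : Fin n → Bool) (c : (enhanced n k).Walk x x),
        c.IsCycle ∧ c.length = k + 3 ∧ s(u, v) ∈ c.edges) ∧
      (∀ (x : Fin n → Bool) (c : (enhanced n k).Walk x x), c.IsCycle →
        Odd c.length → s(u, v) ∈ c.edges → k + 3 ≤ c.length) := by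
  
  intro u v huv
  exact ⟨Stmt17Aux.exists_cycle h1 i hi u v huv,
    fun x c hc hodd hmem => Stmt17Aux.lower hk h1 i hi u v huv x c hc hodd hmem⟩
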